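/- Let n ≥ 2 be an integer, p an integer, T̄ > 0 a real number, and let x₁, x₂ : ℝ → ℂ satisfy, for all real t: x₁(−t) = e^{−iπ/n}·x₂(t), x₂(−t) = e^{iπ/n}·x₁(t), x₁(t + 2T̄) = e^{2πip/n}·x₁(t), and x₂(t + 2T̄) = e^{−2πip/n}·x₂(t). Define u(t) = π(x₁(t), x₂(t)). Then u(−t + T̄) = M(2p−1)·u(t + T̄) for all real t; in particular M(2p−1)·u(T̄) = u(T̄). -/

import Mathlib

open Real Matrix

/-- The map `π : ℂ × ℂ → ℝ³`,
`π(x₁,x₂) = (|x₁|² − |x₂|², 2 Re(x₁ x̄₂), 2 Im(x₁ x̄₂))`. -/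
noncomputable def piMap (x : ℂ × ℂ) : Fin 3 → ℝ :=
  ![‖x.1‖ ^ 2 - ‖x.2‖ ^ 2,
    2 * (x.1 * (starRingEnd ℂ) x.2).re,
    2 * (x.1 * (starRingEnd ℂ) x.2).im]

/-- The 3×3 real matrix `M(k)` with rows `(−1,0,0)`, `(0, cos(2πk/n), sin(2πk/n))`,
`(0, sin(2πk/n), −cos(2πk/n))`. -/
noncomputable def Mmat (n : ℕ) (k : ℤ) : Matrix (Fin 3) (Fin 3) ℝ :=
  !![-1, 0, 0;
     0, Real.cos (2 * π * k / n), Real.sin (2 * π * k / n);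
     0, Real.sin (2 * π * k / n), -Real.cos (2 * π * k / n)]

/-- Under the symmetries `x₁(−t) = e^{−iπ/n}x₂(t)`, `x₂(−t) = e^{iπ/n}x₁(t)`,
`x₁(t+2T̄) = e^{2πip/n}x₁(t)`, `x₂(t+2T̄) = e^{−2πip/n}x₂(t)`, the shape curve
`u(t) = π(x₁(t), x₂(t))` satisfies `u(−t+T̄) = M(2p−1)·u(t+T̄)`; in particular
`M(2p−1)·u(T̄) = u(T̄)`. -/
theorem shape_curve_second_symmetry (n : ℕ) (hn : 2 ≤ n) (p : ℤ) (Tbar : ℝ)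
    (hT : 0 < Tbar) (x₁ x₂ : ℝ → ℂ)
    (h₁ : ∀ t : ℝ, x₁ (-t) = Complex.exp (-(π : ℂ) * Complex.I / (n : ℂ)) * x₂ t)
    (h₂ : ∀ t : ℝ, x₂ (-t) = Complex.exp ((π : ℂ) * Complex.I / (n : ℂ)) * x₁ t)
    (h₃ : ∀ t : ℝ, x₁ (t + 2 * Tbar)
      = Complex.exp (2 * (π : ℂ) * Complex.I * (p : ℂ) / (n : ℂ)) * x₁ t)
    (h₄ : ∀ t : ℝ, x₂ (t + 2 * Tbar)
      = Complex.exp (-(2 * (π : ℂ) * Complex.I * (p : ℂ) / (n : ℂ))) * x₂ t)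
    (u : ℝ → Fin 3 → ℝ) (hu : ∀ t : ℝ, u t = piMap (x₁ t, x₂ t)) :
    (∀ t : ℝ, u (-t + Tbar) = (Mmat n (2 * p - 1)).mulVec (u (t + Tbar))) ∧
    (Mmat n (2 * p - 1)).mulVec (u Tbar) = u Tbar := by
  have hn0 : (n : ℂ) ≠ 0 := Nat.cast_ne_zero.mpr (by omega)
  obtain ⟨θ, hθ⟩ : ∃ θ : ℝ, θ = π * ((2 * p - 1 : ℤ) : ℝ) / n := ⟨_, rfl⟩
  have hex1 : -(π:ℂ) * Complex.I / n + 2 * π * Complex.I * p / n = (θ : ℂ) * Complex.I := by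
    rw [hθ]; push_cast; field_simp; ring
  have hex2 : (π:ℂ) * Complex.I / n + -(2 * π * Complex.I * p / n)
      = -((θ : ℂ) * Complex.I) := by
    rw [hθ]; push_cast; field_simp; ring
  have k1 : ∀ t : ℝ, x₁ (-t + Tbar) = Complex.exp ((θ:ℂ) * Complex.I) * x₂ (t + Tbar) := by
    intro t
    have e0 := h₄ (t + Tbar - 2 * Tbar)
    rw [sub_add_cancel] at e0
    have e1 : x₂ (t + Tbar - 2 * Tbar)
        = Complex.exp (2 * π * Complex.I * p / n) * x₂ (t + Tbar) := by
      rw [e0, ← mul_assoc, ← Complex.exp_add]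
      simp
    have e2 : (-t + Tbar) = -(t + Tbar - 2 * Tbar) := by ring
    rw [e2, h₁, e1, ← mul_assoc, ← Complex.exp_add, hex1]
  have k2 : ∀ t : ℝ, x₂ (-t + Tbar)
      = Complex.exp (-((θ:ℂ) * Complex.I)) * x₁ (t + Tbar) := by
    intro t
    have e0 := h₃ (t + Tbar - 2 * Tbar)
    rw [sub_add_cancel] at e0
    have e1 : x₁ (t + Tbar - 2 * Tbar)
        = Complex.exp (-(2 * π * Complex.I * p / n)) * x₁ (t + Tbar) := by
      rw [e0, ← mul_assoc, ← Complex.exp_add]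
      simp
    have e2 : (-t + Tbar) = -(t + Tbar - 2 * Tbar) := by ring
    rw [e2, h₂, e1, ← mul_assoc, ← Complex.exp_add, hex2]
  have hE : Complex.exp ((θ:ℂ) * Complex.I)
      = (Real.cos θ : ℂ) + (Real.sin θ : ℂ) * Complex.I := by
    rw [Complex.exp_mul_I, ← Complex.ofReal_cos, ← Complex.ofReal_sin]
  have hE' : Complex.exp (-((θ:ℂ) * Complex.I))
      = (Real.cos θ : ℂ) - (Real.sin θ : ℂ) * Complex.I := by
    rw [show -((θ:ℂ) * Complex.I) = ((-θ : ℝ) : ℂ) * Complex.I by push_cast; ring,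
      Complex.exp_mul_I, ← Complex.ofReal_cos, ← Complex.ofReal_sin, Real.cos_neg,
      Real.sin_neg]
    push_cast; ring
  have hpy : Real.sin θ ^ 2 + Real.cos θ ^ 2 = 1 := Real.sin_sq_add_cos_sq θ
  have hM : Mmat n (2 * p - 1)
      = !![-1, 0, 0;
           0, Real.cos θ ^ 2 - Real.sin θ ^ 2, 2 * Real.sin θ * Real.cos θ;
           0, 2 * Real.sin θ * Real.cos θ, -(Real.cos θ ^ 2 - Real.sin θ ^ 2)] := by
    have h2θ : 2 * π * ((2 * p - 1 : ℤ) : ℝ) / n = 2 * θ := by rw [hθ]; ring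
    rw [Mmat, h2θ, Real.cos_two_mul, Real.sin_two_mul]
    have : 2 * Real.cos θ ^ 2 - 1 = Real.cos θ ^ 2 - Real.sin θ ^ 2 := by nlinarith [hpy]
    rw [this]
  have main : ∀ t : ℝ, u (-t + Tbar) = (Mmat n (2 * p - 1)).mulVec (u (t + Tbar)) := by
    intro t
    rw [hu, hu, hM, k1 t, k2 t, hE, hE']
    funext i
    fin_cases i <;>
      simp [piMap, Matrix.mulVec, dotProduct, Fin.sum_univ_three, mul_pow,
        Complex.sq_norm, Complex.normSq_apply, Complex.mul_re, Complex.mul_im,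
        Complex.add_re, Complex.add_im, Complex.sub_re, Complex.sub_im,
        Complex.cos_ofReal_re, Complex.sin_ofReal_re]
    · linear_combination ((x₁ (t + Tbar)).re ^ 2 + (x₁ (t + Tbar)).im ^ 2) * hpy
    · ring
    · ring
  refine ⟨main, ?_⟩
  have h0 := main 0
  rw [show (-0 + Tbar : ℝ) = Tbar by ring, show (0 + Tbar : ℝ) = Tbar by ring] at h0
  exact h0.symm
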